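/- Let G′ be a semi-Markovian causal graph with observed variables V′ and unobserved variables U′ such that there are no directed edges between observed variables and the bidirected edges of G′_{V′} form a spanning tree of V′; fix ε ∈ (0,1), fix V₁ ∈ V′, and let M₁ and M₂ be the SEMs in which every variable is binary, every unobserved variable is uniform on {0,1}, in M₁ every X ∈ V′ satisfies P^{M₁}(x | pa) = (1 − ε)·𝟙[x = ⊕pa] + ε/2, and in M₂ every X ∈ V′ ∖ {V₁} satisfies P^{M₂}(x | pa) = (1 − ε)·𝟙[x = ⊕pa] + ε/2 while P^{M₂}(v₁ | pa) = (1 − ε)·𝟙[v₁ = ¬(⊕pa)] + ε/2, where ⊕pa denotes the XOR of the parent values. Then, for the realization v = 0 assigning 0 to every observed variable, Q^{M₁}[V′](0) ≠ Q^{M₂}[V′](0). -/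

import Mathlib

open scoped Classical

/-- A semi-Markovian causal graph: a DAG over a finite vertex set partitioned into
observed (`obs`) and unobserved (`unobs`) variables, where every unobserved variable
has no parents and exactly two (distinct, observed) children. -/
structure CausalGraph (ν : Type) [Fintype ν] [DecidableEq ν] where
  obs : Finset ν
  unobs : Finset ν
  disj : Disjoint obs unobs
  E : ν → ν → Prop
  edge_mem : ∀ x y, E x y → x ∈ obs ∪ unobs ∧ y ∈ obs ∪ unobs
  acyclic : ∀ x, ¬ Relation.TransGen E x x
  unobs_no_parent : ∀ u ∈ unobs, ∀ w, ¬ E w u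
  unobs_two_children : ∀ u ∈ unobs,
    ∃ a b, a ≠ b ∧ a ∈ obs ∧ b ∈ obs ∧ (∀ w, E u w ↔ w = a ∨ w = b)

namespace CausalGraph

variable {ν : Type} [Fintype ν] [DecidableEq ν]

def verts (G : CausalGraph ν) : Finset ν := G.obs ∪ G.unobs

/-- A structural equation model over the causal graph `G`: finite nonempty domains
(encoded as finite sets of naturals), a pmf for each unobserved variable, and a
conditional pmf (given an assignment to the parents) for each observed variable. -/
structure SEM (G : CausalGraph ν) where
  dom : ν → Finset ℕ
  dom_ne : ∀ x, (dom x).Nonempty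
  pU : ν → ℕ → ℝ
  pU_nonneg : ∀ u n, 0 ≤ pU u n
  pU_sum : ∀ u ∈ G.unobs, ∑ n ∈ dom u, pU u n = 1
  pO : ν → ℕ → (ν → ℕ) → ℝ
  pO_nonneg : ∀ x n pa, 0 ≤ pO x n pa
  pO_sum : ∀ x ∈ G.obs, ∀ pa : ν → ℕ, ∑ n ∈ dom x, pO x n pa = 1
  pO_par : ∀ x n (pa pa' : ν → ℕ), (∀ p, G.E p x → pa p = pa' p) → pO x n pa = pO x n pa'

namespace SEM

variable {G : CausalGraph ν}

/-- Full assignments: all variables of `G` get values in their domains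
(non-vertices are pinned to `0`). -/
noncomputable def fullAssign (M : SEM G) : Finset (ν → ℕ) :=
  Fintype.piFinset (fun x => if x ∈ G.verts then M.dom x else {0})

/-- Observed assignments `dom(V)`: observed variables get values in their domains
(all other coordinates are pinned to `0`). -/
noncomputable def obsAssign (M : SEM G) : Finset (ν → ℕ) :=
  Fintype.piFinset (fun x => if x ∈ G.obs then M.dom x else {0})

/-- `Q^M[S](v) = Σ_u Π_{X ∈ S} P(x | pa_G(X)) Π_{U} P(u)`. -/
noncomputable def Q (M : SEM G) (S : Finset ν) (v : ν → ℕ) : ℝ :=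
  ∑ w ∈ M.fullAssign.filter (fun w => ∀ x ∈ G.obs, w x = v x),
    (∏ x ∈ S, M.pO x (w x) w) * ∏ u ∈ G.unobs, M.pU u (w u)

/-- The observational distribution `P^M(v) = Q^M[V](v)`. -/
noncomputable def P (M : SEM G) (v : ν → ℕ) : ℝ := M.Q G.obs v

/-- Post-interventional probability `P^M_x(y)`: sum of `Q^M[V∖X]` over all observed
realizations consistent with `x` on `X` and `y` on `Y`. -/
noncomputable def Px (M : SEM G) (X : Finset ν) (x : ν → ℕ) (Y : Finset ν) (y : ν → ℕ) : ℝ :=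
  ∑ v ∈ M.obsAssign.filter (fun v => (∀ i ∈ X, v i = x i) ∧ (∀ i ∈ Y, v i = y i)),
    M.Q (G.obs \ X) v

/-- `M ∈ 𝕄⁺(G)`: strictly positive observational distribution. -/
def positive (M : SEM G) : Prop := ∀ v ∈ M.obsAssign, 0 < M.P v

end SEM

/-- The causal effect of `X` on `Y` is identifiable from `G`. -/
def Identifiable (G : CausalGraph ν) (X Y : Finset ν) : Prop :=
  ∀ M₁ M₂ : SEM G, M₁.positive → M₂.positive →
    (∀ i ∈ G.obs, M₁.dom i = M₂.dom i) →
    (∀ v ∈ M₁.obsAssign, M₁.P v = M₂.P v) →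
    ∀ x y : ν → ℕ, (∀ i ∈ X, x i ∈ M₁.dom i) → (∀ i ∈ Y, y i ∈ M₁.dom i) →
      M₁.Px X x Y y = M₂.Px X x Y y

/-- `Q[S]` is identifiable from `G`. -/
def QIdentifiable (G : CausalGraph ν) (S : Finset ν) : Prop :=
  Identifiable G (G.obs \ S) S

/-- The causal effect of `X` on `Y` is g-identifiable from `(𝔸, G)`. -/
def GIdentifiable (G : CausalGraph ν) (𝔸 : Finset (Finset ν)) (X Y : Finset ν) : Prop :=
  ∀ M₁ M₂ : SEM G, M₁.positive → M₂.positive →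
    (∀ i ∈ G.obs, M₁.dom i = M₂.dom i) →
    (∀ A ∈ 𝔸, ∀ v ∈ M₁.obsAssign, M₁.Q A v = M₂.Q A v) →
    ∀ x y : ν → ℕ, (∀ i ∈ X, x i ∈ M₁.dom i) → (∀ i ∈ Y, y i ∈ M₁.dom i) →
      M₁.Px X x Y y = M₂.Px X x Y y

/-- `Q[S]` is g-identifiable from `(𝔸, G)`. -/
def QGIdentifiable (G : CausalGraph ν) (𝔸 : Finset (Finset ν)) (S : Finset ν) : Prop :=
  GIdentifiable G 𝔸 (G.obs \ S) S

/-- Bidirected edge of `G_X` between `a` and `b`: distinct members of `X` sharing an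
unobserved parent (whose two children then necessarily both lie in `X`). -/
def biEdge (G : CausalGraph ν) (X : Finset ν) (a b : ν) : Prop :=
  a ≠ b ∧ a ∈ X ∧ b ∈ X ∧ ∃ u ∈ G.unobs, G.E u a ∧ G.E u b

/-- `X` is a single c-component of `G`. -/
def SingleC (G : CausalGraph ν) (X : Finset ν) : Prop :=
  X.Nonempty ∧ ∀ a ∈ X, ∀ b ∈ X, Relation.ReflTransGen (G.biEdge X) a b

/-- The c-components of `S`: connected components of the bidirected part of `G_S`. -/
noncomputable def cComponents (G : CausalGraph ν) (S : Finset ν) : Finset (Finset ν) :=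
  S.image (fun a => S.filter (fun b => Relation.ReflTransGen (G.biEdge S) a b))

/-- Directed edge of `G_X` (both endpoints in `X`). -/
def dirEdgeIn (G : CausalGraph ν) (X : Finset ν) (a b : ν) : Prop :=
  a ∈ X ∧ b ∈ X ∧ G.E a b

/-- `Anc_Y(G_X)`: members of `X` having a directed path in `G_X` to some member of `Y`. -/
noncomputable def ancIn (G : CausalGraph ν) (X Y : Finset ν) : Finset ν :=
  X.filter (fun a => ∃ y ∈ Y, Relation.ReflTransGen (G.dirEdgeIn X) a y)

/-- Unobserved vertices of the induced subgraph `G[A]`: unobserved vertices of `G`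
both of whose children lie in `A`. -/
noncomputable def inducedUnobs (G : CausalGraph ν) (A : Finset ν) : Finset ν :=
  G.unobs.filter (fun u => ∀ w, G.E u w → w ∈ A)

/-- The induced subgraph `G[A]`. -/
noncomputable def induced (G : CausalGraph ν) (A : Finset ν) : CausalGraph ν where
  obs := A ∩ G.obs
  unobs := G.inducedUnobs A
  disj := G.disj.mono Finset.inter_subset_right (Finset.filter_subset _ _)
  E x y := G.E x y ∧ x ∈ (A ∩ G.obs) ∪ G.inducedUnobs A ∧ y ∈ (A ∩ G.obs) ∪ G.inducedUnobs A
  edge_mem := fun x y h => ⟨h.2.1, h.2.2⟩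
  acyclic := fun x h => G.acyclic x (by
    have key : ∀ a b, Relation.TransGen (fun x y => G.E x y ∧ x ∈ (A ∩ G.obs) ∪ G.inducedUnobs A ∧
        y ∈ (A ∩ G.obs) ∪ G.inducedUnobs A) a b → Relation.TransGen G.E a b := by
      intro a b hab
      induction hab with
      | single hab => exact .single hab.1
      | tail _ hbc ih => exact .tail ih hbc.1
    exact key x x h)
  unobs_no_parent := fun u hu w hw =>
    G.unobs_no_parent u (Finset.mem_filter.mp hu).1 w hw.1
  unobs_two_children := by
    intro u hu
    have hu' := Finset.mem_filter.mp hu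
    obtain ⟨a, b, hab, ha, hb, hiff⟩ := G.unobs_two_children u hu'.1
    have hEa : G.E u a := (hiff a).mpr (Or.inl rfl)
    have hEb : G.E u b := (hiff b).mpr (Or.inr rfl)
    have haA : a ∈ A := hu'.2 a hEa
    have hbA : b ∈ A := hu'.2 b hEb
    refine ⟨a, b, hab, Finset.mem_inter.mpr ⟨haA, ha⟩, Finset.mem_inter.mpr ⟨hbA, hb⟩, ?_⟩
    intro w
    constructor
    · intro hw; exact (hiff w).mp hw.1
    · rintro (rfl | rfl)
      · exact ⟨hEa, Finset.mem_union.mpr (Or.inr hu),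
          Finset.mem_union.mpr (Or.inl (Finset.mem_inter.mpr ⟨haA, ha⟩))⟩
      · exact ⟨hEb, Finset.mem_union.mpr (Or.inr hu),
          Finset.mem_union.mpr (Or.inl (Finset.mem_inter.mpr ⟨hbA, hb⟩))⟩

/-- `H` is a subgraph of `G`. -/
def IsSubgraph (H G : CausalGraph ν) : Prop :=
  H.obs ⊆ G.obs ∧ H.unobs ⊆ G.unobs ∧ ∀ a b, H.E a b → G.E a b

/-- `H` is an `R`-rooted c-forest: `R` is the root set of `H`, the observed vertex set of
`H` is a single c-component, and every observed vertex has at most one child in `H`. -/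
def IsCForest (H : CausalGraph ν) (R : Finset ν) : Prop :=
  H.obs.filter (fun x => ∀ w, ¬ H.E x w) = R ∧
  H.SingleC H.obs ∧
  ∀ x ∈ H.obs, ∀ w w', H.E x w → H.E x w' → w = w'

end CausalGraph

/-- The XOR (mod-2 sum) of the values of the parents of `x` under the assignment `pa`. -/
noncomputable def CausalGraph.xorPa {ν : Type} [Fintype ν] [DecidableEq ν]
    (G : CausalGraph ν) (x : ν) (pa : ν → ℕ) : ℕ :=
  (∑ p ∈ Finset.univ.filter (fun p => G.E p x), pa p) % 2


private lemma neg_one_pow_nat (k : ℕ) :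
    ((-1:ℝ))^k = 1 - 2*((k % 2 : ℕ):ℝ) := by
  rcases Nat.even_or_odd k with h | h
  · rw [h.neg_one_pow, Nat.even_iff.mp h]; norm_num
  · rw [h.neg_one_pow, Nat.odd_iff.mp h]; norm_num

private lemma crossing_lemma {α : Type*} (r : α → α → Prop) (P : α → Prop) :
    ∀ {x y : α}, Relation.ReflTransGen r x y → P x → ¬ P y →
      ∃ a b, P a ∧ ¬ P b ∧ r a b := by
  intro x y h
  induction h with
  | refl => intro hx hy; exact absurd hx hy
  | @tail b c h₁ h₂ ih =>
    intro hx hy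
    by_cases hb : P b
    · exact ⟨b, c, hb, hy, h₂⟩
    · exact ih hx hb

/-- Appendix D, second lemma. In the two XOR-type models `M₁`, `M₂`
on a graph whose bidirected edges form a spanning tree of `V'` and which has no
directed edges between observed variables, the full `Q` functionals differ at the
all-zero realization: `Q^{M₁}[V'](0) ≠ Q^{M₂}[V'](0)`. -/
theorem Q_full_differ_at_zero
    {ν : Type} [Fintype ν] [DecidableEq ν] (G' : CausalGraph ν)
    (hnoDir : ∀ a b : ν, a ∈ G'.obs → b ∈ G'.obs → ¬ G'.E a b)
    (hconn : G'.SingleC G'.obs) (htree : G'.unobs.card = G'.obs.card - 1)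
    (ε : ℝ) (hε0 : 0 < ε) (hε1 : ε < 1)
    (V₁ : ν) (hV₁ : V₁ ∈ G'.obs)
    (M₁ M₂ : CausalGraph.SEM G')
    (hdom1 : ∀ i ∈ G'.verts, M₁.dom i = {0, 1})
    (hdom2 : ∀ i ∈ G'.verts, M₂.dom i = {0, 1})
    (hU1 : ∀ u ∈ G'.unobs, ∀ n ∈ ({0, 1} : Finset ℕ), M₁.pU u n = 1/2)
    (hU2 : ∀ u ∈ G'.unobs, ∀ n ∈ ({0, 1} : Finset ℕ), M₂.pU u n = 1/2)
    (hO1 : ∀ x ∈ G'.obs, ∀ n ∈ ({0, 1} : Finset ℕ), ∀ pa : ν → ℕ,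
      (∀ p, G'.E p x → pa p ∈ ({0, 1} : Finset ℕ)) →
      M₁.pO x n pa = (1 - ε) * (if n = G'.xorPa x pa then 1 else 0) + ε/2)
    (hO2 : ∀ x ∈ G'.obs, x ≠ V₁ → ∀ n ∈ ({0, 1} : Finset ℕ), ∀ pa : ν → ℕ,
      (∀ p, G'.E p x → pa p ∈ ({0, 1} : Finset ℕ)) →
      M₂.pO x n pa = (1 - ε) * (if n = G'.xorPa x pa then 1 else 0) + ε/2)
    (hO2V : ∀ n ∈ ({0, 1} : Finset ℕ), ∀ pa : ν → ℕ,
      (∀ p, G'.E p V₁ → pa p ∈ ({0, 1} : Finset ℕ)) →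
      M₂.pO V₁ n pa = (1 - ε) * (if n = 1 - G'.xorPa V₁ pa then 1 else 0) + ε/2) :
    M₁.Q G'.obs (fun _ => 0) ≠ M₂.Q G'.obs (fun _ => 0) := by
    classical
  -- abbreviations
  set O : Finset ν := G'.obs with hOdef
  set U : Finset ν := G'.unobs with hUdef
  set c : ℝ := 1 - ε with hcdef
  have hcpos : 0 < c := by simp [hcdef]; linarith
  set t : ν → Finset ℕ := fun x => if x ∈ U then ({0,1} : Finset ℕ) else {0} with htdef
  set B : Finset (ν → ℕ) := Fintype.piFinset t with hBdef
  set pa : ν → Finset ν := fun x => Finset.univ.filter (fun p => G'.E p x) with hpadef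
  set s : (ν → ℕ) → ν → ℝ := fun w x => (-1 : ℝ) ^ (∑ p ∈ pa x, w p) with hsdef
  set cS : Finset ν → ν → ℕ := fun S p => (S.filter (fun x => G'.E p x)).card with hcSdef
  -- membership facts
  have hmem01 : ∀ w : ν → ℕ, (∀ a, w a ∈ t a) → ∀ p, w p ∈ ({0,1} : Finset ℕ) := by
    intro w h p
    have := h p
    by_cases hp : p ∈ U
    · simpa [htdef, hp] using this
    · simp [htdef, hp] at this
      simp [this]
  have hmem0 : ∀ w : ν → ℕ, (∀ a, w a ∈ t a) → ∀ x, x ∉ U → w x = 0 := by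
    intro w h x hx
    have := h x
    simpa [htdef, hx] using this
  have hOnotU : ∀ x ∈ O, x ∉ U := by
    intro x hx hxU
    exact Finset.disjoint_left.mp G'.disj hx hxU
  -- the filtered full assignment set is B
  have hfil : ∀ (M : CausalGraph.SEM G'), (∀ i ∈ G'.verts, M.dom i = ({0,1} : Finset ℕ)) →
      M.fullAssign.filter (fun w => ∀ x ∈ G'.obs, w x = 0) = B := by
    intro M hdom
    ext w
    simp only [Finset.mem_filter, CausalGraph.SEM.fullAssign, Fintype.mem_piFinset, hBdef,
      Fintype.mem_piFinset]
    constructor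
    · rintro ⟨h1, h2⟩ x
      by_cases hxU : x ∈ U
      · have hv : x ∈ G'.verts := Finset.mem_union_right _ hxU
        have := h1 x
        rw [if_pos hv, hdom x hv] at this
        simpa [htdef, hxU] using this
      · by_cases hxO : x ∈ O
        · simp [htdef, hxU, h2 x hxO]
        · have hv : x ∉ G'.verts := by
            simp [CausalGraph.verts, ← hOdef, ← hUdef, hxO, hxU]
          have := h1 x
          rw [if_neg hv] at this
          simpa [htdef, hxU] using this
    · intro h
      refine ⟨fun x => ?_, fun x hx => hmem0 w h x (hOnotU x hx)⟩
      by_cases hv : x ∈ G'.verts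
      · rw [if_pos hv, hdom x hv]
        exact hmem01 w h x
      · rw [if_neg hv]
        have hxU : x ∉ U := fun hxU => hv (Finset.mem_union_right _ hxU)
        simp [hmem0 w h x hxU]
  -- pointwise pO values
  have hxor : ∀ x, ∀ w : ν → ℕ, G'.xorPa x w = (∑ p ∈ pa x, w p) % 2 := by
    intro x w; rfl
  have hpO1 : ∀ w ∈ B, ∀ x ∈ O, M₁.pO x 0 w = (1 + c * s w x) / 2 := by
    intro w hw x hx
    have hw' : ∀ a, w a ∈ t a := Fintype.mem_piFinset.mp hw
    rw [hO1 x hx 0 (by simp) w (fun p _ => hmem01 w hw' p), hxor]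
    rcases Nat.even_or_odd (∑ p ∈ pa x, w p) with h | h
    · simp [hsdef, Nat.even_iff.mp h, h.neg_one_pow, hcdef]; try ring
    · simp [hsdef, Nat.odd_iff.mp h, h.neg_one_pow, hcdef]; try ring
  have hpO2 : ∀ w ∈ B, ∀ x ∈ O, x ≠ V₁ → M₂.pO x 0 w = (1 + c * s w x) / 2 := by
    intro w hw x hx hne
    have hw' : ∀ a, w a ∈ t a := Fintype.mem_piFinset.mp hw
    rw [hO2 x hx hne 0 (by simp) w (fun p _ => hmem01 w hw' p), hxor]
    rcases Nat.even_or_odd (∑ p ∈ pa x, w p) with h | h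
    · simp [hsdef, Nat.even_iff.mp h, h.neg_one_pow, hcdef]; try ring
    · simp [hsdef, Nat.odd_iff.mp h, h.neg_one_pow, hcdef]; try ring
  have hpO2V : ∀ w ∈ B, M₂.pO V₁ 0 w = (1 - c * s w V₁) / 2 := by
    intro w hw
    have hw' : ∀ a, w a ∈ t a := Fintype.mem_piFinset.mp hw
    rw [hO2V 0 (by simp) w (fun p _ => hmem01 w hw' p), hxor]
    rcases Nat.even_or_odd (∑ p ∈ pa V₁, w p) with h | h
    · simp [hsdef, Nat.even_iff.mp h, h.neg_one_pow, hcdef]; try ring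
    · simp [hsdef, Nat.odd_iff.mp h, h.neg_one_pow, hcdef]; try ring
  -- product of s over a set, as a product over all coordinates
  have hprodS : ∀ S : Finset ν, ∀ w : ν → ℕ,
      ∏ x ∈ S, s w x = ∏ p : ν, ((-1:ℝ) ^ (w p)) ^ (cS S p) := by
    intro S w
    calc ∏ x ∈ S, s w x = ∏ x ∈ S, ∏ p ∈ pa x, (-1:ℝ) ^ (w p) := by
          refine Finset.prod_congr rfl fun x _ => ?_
          rw [Finset.prod_pow_eq_pow_sum]
      _ = ∏ x ∈ S, ∏ p : ν, (if G'.E p x then (-1:ℝ) ^ (w p) else 1) := by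
          refine Finset.prod_congr rfl fun x _ => ?_
          exact Finset.prod_filter _ _
      _ = ∏ p : ν, ∏ x ∈ S, (if G'.E p x then (-1:ℝ) ^ (w p) else 1) := Finset.prod_comm
      _ = ∏ p : ν, ((-1:ℝ) ^ (w p)) ^ (cS S p) := by
          refine Finset.prod_congr rfl fun p _ => ?_
          rw [← Finset.prod_filter, Finset.prod_const]
  -- the key character-sum lemma
  have keyL : ∀ S : Finset ν, S ⊆ O → V₁ ∈ S →
      (∑ w ∈ B, ∏ x ∈ S, s w x) = if S = O then (2:ℝ) ^ U.card else 0 := by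
    intro S hSO hV₁S
    have h1 : (∑ w ∈ B, ∏ x ∈ S, s w x)
        = ∏ p : ν, ∑ v ∈ t p, ((-1:ℝ) ^ v) ^ (cS S p) := by
      rw [Finset.prod_univ_sum]
      exact Finset.sum_congr rfl fun w _ => hprodS S w
    rw [h1]
    have h2 : ∀ p : ν, (∑ v ∈ t p, ((-1:ℝ) ^ v) ^ (cS S p))
        = if p ∈ U then 1 + (-1:ℝ) ^ (cS S p) else 1 := by
      intro p
      by_cases hp : p ∈ U
      · rw [htdef]
        simp only [if_pos hp]
        rw [Finset.sum_pair (by norm_num : (0:ℕ) ≠ 1)]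
        norm_num
      · rw [htdef]
        simp only [if_neg hp]
        simp
    rw [Finset.prod_congr rfl (fun p _ => h2 p), Finset.prod_ite_mem, Finset.univ_inter]
    by_cases hSeq : S = O
    · subst hSeq
      rw [if_pos rfl]
      have hterm : ∀ u ∈ U, (1:ℝ) + (-1:ℝ) ^ (cS O u) = 2 := by
        intro u huU
        obtain ⟨a, b, hab, haO, hbO, hiff⟩ := G'.unobs_two_children u huU
        have hfS : O.filter (fun x => G'.E u x) = {a, b} := by
          ext x
          simp only [Finset.mem_filter, Finset.mem_insert, Finset.mem_singleton, hiff x]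
          constructor
          · rintro ⟨_, h⟩; exact h
          · rintro (rfl | rfl)
            · exact ⟨haO, Or.inl rfl⟩
            · exact ⟨hbO, Or.inr rfl⟩
        have : cS O u = 2 := by
          rw [hcSdef]; simp only [hfS]; exact Finset.card_pair hab
        rw [this]; norm_num
      rw [Finset.prod_congr rfl hterm, Finset.prod_const]
    · rw [if_neg hSeq]
      have hss : S ⊂ O := Finset.ssubset_iff_subset_ne.mpr ⟨hSO, hSeq⟩
      obtain ⟨y, hyO, hyS⟩ := Finset.exists_of_ssubset hss
      have hpath : Relation.ReflTransGen (G'.biEdge G'.obs) V₁ y :=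
        hconn.2 V₁ hV₁ y hyO
      obtain ⟨a, b, haS, hbS, hr⟩ :=
        crossing_lemma (G'.biEdge G'.obs) (fun z => z ∈ S) hpath hV₁S hyS
      obtain ⟨hne, _, _, u, huU, hEa, hEb⟩ := hr
      obtain ⟨a', b', hab', _, _, hiff⟩ := G'.unobs_two_children u huU
      have hEiff : ∀ x, G'.E u x ↔ x = a ∨ x = b := by
        have ha : a = a' ∨ a = b' := (hiff a).mp hEa
        have hb : b = a' ∨ b = b' := (hiff b).mp hEb
        intro x
        rw [hiff x]
        rcases ha with rfl | rfl <;> rcases hb with rfl | rfl <;> tauto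
      have hfS : S.filter (fun x => G'.E u x) = {a} := by
        ext x
        simp only [Finset.mem_filter, Finset.mem_singleton, hEiff x]
        constructor
        · rintro ⟨hxS, rfl | rfl⟩
          · rfl
          · exact absurd hxS hbS
        · rintro rfl; exact ⟨haS, Or.inl rfl⟩
      refine Finset.prod_eq_zero huU ?_
      have : cS S u = 1 := by
        rw [hcSdef]; simp only [hfS]; exact Finset.card_singleton a
      rw [this]; norm_num
  -- rewrite the two Q values
  have hQ1 : M₁.Q G'.obs (fun _ => 0)
      = ∑ w ∈ B, (∏ x ∈ O, ((1 + c * s w x) / 2)) * (1/2 : ℝ) ^ U.card := by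
    rw [CausalGraph.SEM.Q]
    rw [show (M₁.fullAssign.filter (fun w => ∀ x ∈ G'.obs, w x = (fun _ => (0:ℕ)) x)) = B from
      hfil M₁ hdom1]
    refine Finset.sum_congr rfl fun w hw => ?_
    have hw' : ∀ a, w a ∈ t a := Fintype.mem_piFinset.mp hw
    congr 1
    · refine Finset.prod_congr rfl fun x hx => ?_
      rw [hmem0 w hw' x (hOnotU x hx), hpO1 w hw x hx]
    · rw [Finset.prod_congr rfl (fun u hu => hU1 u hu (w u) (hmem01 w hw' u)),
        Finset.prod_const]
  have hQ2 : M₂.Q G'.obs (fun _ => 0)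
      = ∑ w ∈ B, ((1 - c * s w V₁) / 2 * ∏ x ∈ O.erase V₁, ((1 + c * s w x) / 2))
          * (1/2 : ℝ) ^ U.card := by
    rw [CausalGraph.SEM.Q]
    rw [show (M₂.fullAssign.filter (fun w => ∀ x ∈ G'.obs, w x = (fun _ => (0:ℕ)) x)) = B from
      hfil M₂ hdom2]
    refine Finset.sum_congr rfl fun w hw => ?_
    have hw' : ∀ a, w a ∈ t a := Fintype.mem_piFinset.mp hw
    congr 1
    · rw [← Finset.mul_prod_erase O _ hV₁]
      congr 1
      · rw [hmem0 w hw' V₁ (hOnotU V₁ hV₁), hpO2V w hw]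
      · refine Finset.prod_congr rfl fun x hx => ?_
        have hxO : x ∈ O := Finset.mem_of_mem_erase hx
        rw [hmem0 w hw' x (hOnotU x hxO),
          hpO2 w hw x hxO (Finset.ne_of_mem_erase hx)]
    · rw [Finset.prod_congr rfl (fun u hu => hU2 u hu (w u) (hmem01 w hw' u)),
        Finset.prod_const]
  -- expansion of the product over O.erase V₁
  have hPw : ∀ w : ν → ℕ, ∏ x ∈ O.erase V₁, ((1 + c * s w x) / 2)
      = (1/2 : ℝ) ^ (O.erase V₁).card
        * ∑ T ∈ (O.erase V₁).powerset, c ^ T.card * ∏ x ∈ T, s w x := by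
    intro w
    calc ∏ x ∈ O.erase V₁, ((1 + c * s w x) / 2)
        = (∏ _x ∈ O.erase V₁, (1/2 : ℝ)) * ∏ x ∈ O.erase V₁, (c * s w x + 1) := by
          rw [← Finset.prod_mul_distrib]
          exact Finset.prod_congr rfl fun x _ => by ring
      _ = (1/2 : ℝ) ^ (O.erase V₁).card
          * ∑ T ∈ (O.erase V₁).powerset, c ^ T.card * ∏ x ∈ T, s w x := by
          rw [Finset.prod_const, Finset.prod_add]
          congr 1
          refine Finset.sum_congr rfl fun T _ => ?_
          rw [Finset.prod_const_one, mul_one, Finset.prod_mul_distrib, Finset.prod_const]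
  -- the inner double sum
  have hX : ∑ w ∈ B, ∑ T ∈ (O.erase V₁).powerset, c ^ T.card * (s w V₁ * ∏ x ∈ T, s w x)
      = c ^ (O.erase V₁).card * 2 ^ U.card := by
    rw [Finset.sum_comm]
    calc ∑ T ∈ (O.erase V₁).powerset, ∑ w ∈ B, c ^ T.card * (s w V₁ * ∏ x ∈ T, s w x)
        = ∑ T ∈ (O.erase V₁).powerset, c ^ T.card * ∑ w ∈ B, ∏ x ∈ insert V₁ T, s w x := by
          refine Finset.sum_congr rfl fun T hT => ?_
          have hV₁T : V₁ ∉ T := fun h =>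
            Finset.notMem_erase V₁ O (Finset.mem_powerset.mp hT h)
          rw [← Finset.mul_sum]
          congr 1
          refine Finset.sum_congr rfl fun w _ => ?_
          rw [Finset.prod_insert hV₁T]
      _ = ∑ T ∈ (O.erase V₁).powerset,
            (if T = O.erase V₁ then c ^ T.card * (2:ℝ) ^ U.card else 0) := by
          refine Finset.sum_congr rfl fun T hT => ?_
          have hTsub : T ⊆ O.erase V₁ := Finset.mem_powerset.mp hT
          have hV₁T : V₁ ∉ T := fun h => Finset.notMem_erase V₁ O (hTsub h)
          have hsub : insert V₁ T ⊆ O := by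
            intro z hz
            rcases Finset.mem_insert.mp hz with rfl | hz'
            · exact hV₁
            · exact Finset.mem_of_mem_erase (hTsub hz')
          rw [keyL (insert V₁ T) hsub (Finset.mem_insert_self _ _)]
          by_cases h : T = O.erase V₁
          · subst h
            rw [if_pos (Finset.insert_erase hV₁), if_pos rfl]
          · rw [if_neg (fun h' => h (by rw [← Finset.erase_insert hV₁T, h'])), if_neg h, mul_zero]
      _ = c ^ (O.erase V₁).card * 2 ^ U.card := by
          rw [Finset.sum_ite_eq' _ (O.erase V₁)]
          rw [if_pos (Finset.mem_powerset_self _)]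
  -- putting it together
  have key : M₁.Q G'.obs (fun _ => 0) - M₂.Q G'.obs (fun _ => 0)
      = ((1/2 : ℝ) ^ U.card * c * (1/2 : ℝ) ^ (O.erase V₁).card)
        * (c ^ (O.erase V₁).card * 2 ^ U.card) := by
    calc M₁.Q G'.obs (fun _ => 0) - M₂.Q G'.obs (fun _ => 0)
        = ∑ w ∈ B, (c * s w V₁ * ∏ x ∈ O.erase V₁, ((1 + c * s w x) / 2))
            * (1/2 : ℝ) ^ U.card := by
          rw [hQ1, hQ2, ← Finset.sum_sub_distrib]
          refine Finset.sum_congr rfl fun w _ => ?_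
          rw [← Finset.mul_prod_erase O _ hV₁]
          ring
      _ = ∑ w ∈ B, (c * s w V₁ * ((1/2 : ℝ) ^ (O.erase V₁).card
            * ∑ T ∈ (O.erase V₁).powerset, c ^ T.card * ∏ x ∈ T, s w x))
            * (1/2 : ℝ) ^ U.card := by
          refine Finset.sum_congr rfl fun w _ => ?_
          rw [hPw w]
      _ = ((1/2 : ℝ) ^ U.card * c * (1/2 : ℝ) ^ (O.erase V₁).card)
          * ∑ w ∈ B, ∑ T ∈ (O.erase V₁).powerset,
              c ^ T.card * (s w V₁ * ∏ x ∈ T, s w x) := by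
          rw [Finset.mul_sum]
          refine Finset.sum_congr rfl fun w _ => ?_
          simp only [Finset.mul_sum, Finset.sum_mul]
          exact Finset.sum_congr rfl fun T _ => by ring
      _ = ((1/2 : ℝ) ^ U.card * c * (1/2 : ℝ) ^ (O.erase V₁).card)
          * (c ^ (O.erase V₁).card * 2 ^ U.card) := by rw [hX]
  intro heq
  rw [heq, sub_self] at key
  have hpos : (0:ℝ) < ((1/2 : ℝ) ^ U.card * c * (1/2 : ℝ) ^ (O.erase V₁).card)
      * (c ^ (O.erase V₁).card * 2 ^ U.card) := by positivity
  linarith [key, hpos]
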